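/- Let Ψ = ⟨z₁⟩ * ⟨z₂⟩ * ⟨z₃⟩ be the free product of three cyclic groups of order 2, and let ε : Ψ → ⟨z₁⟩ × ⟨z₂⟩ × ⟨z₃⟩ be the canonical (abelianization) homomorphism. Let F' = {g ∈ Ψ : ε(g) = (ε₁, ε₂, ε₃) with ε₁ = ε₂ = ε₃}. Then F' is the free group on the three elements u = z₁z₂z₃, v = z₂z₃z₁, and w = z₃z₁z₂. -/

import Mathlib

set_option linter.unusedVariables false

namespace CSP

/-- The free product `Ψ = ⟨z₁⟩ * ⟨z₂⟩ * ⟨z₃⟩` of three cyclic groups of order two. -/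
abbrev Psi : Type := Monoid.CoprodI (fun _ : Fin 3 => Multiplicative (ZMod 2))

/-- The generator `zᵢ` of the `i`-th free factor of `Ψ`. -/
def z (i : Fin 3) : Psi :=
  Monoid.CoprodI.of (i := i) (Multiplicative.ofAdd (1 : ZMod 2))

/-- The canonical (abelianization) homomorphism `ε : Ψ → ⟨z₁⟩ × ⟨z₂⟩ × ⟨z₃⟩`. -/
def eps : Psi →* (∀ _ : Fin 3, Multiplicative (ZMod 2)) :=
  Monoid.CoprodI.lift fun i =>
    MonoidHom.mulSingle (fun _ : Fin 3 => Multiplicative (ZMod 2)) i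

/-- The "diagonal" subgroup of `⟨z₁⟩ × ⟨z₂⟩ × ⟨z₃⟩` of triples with all coordinates
equal. -/
def diagSubgroup : Subgroup (∀ _ : Fin 3, Multiplicative (ZMod 2)) where
  carrier := {p | p 0 = p 1 ∧ p 1 = p 2}
  one_mem' := ⟨rfl, rfl⟩
  mul_mem' := fun {a b} ha hb => by
    constructor
    · show a 0 * b 0 = a 1 * b 1
      rw [ha.1, hb.1]
    · show a 1 * b 1 = a 2 * b 2
      rw [ha.2, hb.2]
  inv_mem' := fun {a} ha => by
    constructor
    · show (a 0)⁻¹ = (a 1)⁻¹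
      rw [ha.1]
    · show (a 1)⁻¹ = (a 2)⁻¹
      rw [ha.2]

/-- The subgroup `F' = {g ∈ Ψ | ε(g) = (ε₁,ε₂,ε₃) with ε₁ = ε₂ = ε₃}`. -/
def Fprime : Subgroup Psi := Subgroup.comap eps diagSubgroup

-- basic z lemmas
lemma zsq (i : Fin 3) : z i * z i = 1 := by
  rw [z, ← map_mul]
  rw [show (Multiplicative.ofAdd (1 : ZMod 2)) * (Multiplicative.ofAdd 1) = 1 by decide, map_one]

lemma zinv (i : Fin 3) : (z i)⁻¹ = z i := inv_eq_of_mul_eq_one_right (zsq i)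

lemma zz (i : Fin 3) (a : Psi) : z i * (z i * a) = a := by
  rw [← mul_assoc, zsq, one_mul]

-- the state space
abbrev XS : Type := Option (Fin 3) × FreeGroup (Fin 3)

def sfun (i : Fin 3) : XS → XS
  | (none, w) => (some i, w)
  | (some j, w) =>
    if j = i then (none, w)
    else if i = j + 1 then (some (j + 2), (FreeGroup.of j)⁻¹ * w)
    else (some (j + 1), FreeGroup.of (j + 1) * w)

lemma sfun_invol (i : Fin 3) : Function.Involutive (sfun i) := by
  rintro ⟨s, w⟩
  cases s with
  | none => simp [sfun]
  | some j => fin_cases i <;> fin_cases j <;> simp [sfun]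

def sigma (i : Fin 3) : Equiv.Perm XS := (sfun_invol i).toPerm

lemma sigma_apply (i : Fin 3) (p : XS) : sigma i p = sfun i p := rfl

lemma sigma_sq (i : Fin 3) : sigma i ^ 2 = 1 := by
  refine Equiv.ext fun p => ?_
  rw [sq, Equiv.Perm.mul_apply, sigma_apply, sigma_apply, sfun_invol i p, Equiv.Perm.one_apply]



def tau (i : Fin 3) : Multiplicative (ZMod 2) →* Equiv.Perm XS :=
  MonoidHom.mk' (fun m => sigma i ^ (m.toAdd.val)) (by
    intro a b
    have key : ∀ n : ℕ, sigma i ^ (n % 2) = sigma i ^ n := by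
      intro n
      conv_rhs => rw [← Nat.div_add_mod n 2]
      rw [pow_add, pow_mul, sigma_sq, one_pow, one_mul]
    show sigma i ^ ((a * b).toAdd.val) = _
    rw [toAdd_mul, ZMod.val_add, key, pow_add])

def Phi : Psi →* Equiv.Perm XS := Monoid.CoprodI.lift tau

lemma Phi_z (i : Fin 3) : Phi (z i) = sigma i := by
  rw [Phi, z, Monoid.CoprodI.lift_of]
  show sigma i ^ ((Multiplicative.ofAdd (1 : ZMod 2)).toAdd.val) = sigma i
  rw [toAdd_ofAdd, ZMod.val_one, pow_one]

lemma shape (g : Psi) : ∀ p : XS, Phi g p = ((Phi g (p.1, 1)).1, (Phi g (p.1, 1)).2 * p.2) := by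
  induction g using Monoid.CoprodI.induction_on with
  | one => intro p; simp
  | of i m =>
    have hm : m = 1 ∨ m = Multiplicative.ofAdd 1 :=
      (show ∀ x : Multiplicative (ZMod 2), x = 1 ∨ x = Multiplicative.ofAdd 1 by decide) m
    rcases hm with rfl | rfl
    · intro p; simp
    · intro p
      rw [show Monoid.CoprodI.of (i := i) (Multiplicative.ofAdd (1 : ZMod 2)) = z i from rfl,
        Phi_z]
      obtain ⟨s, w⟩ := p
      cases s with
      | none => simp [sigma_apply, sfun]
      | some j => fin_cases i <;> fin_cases j <;> simp [sigma_apply, sfun]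
  | mul x y hx hy =>
    intro p
    rw [map_mul, Equiv.Perm.mul_apply, Equiv.Perm.mul_apply, hy p, hx ((Phi y (p.1, 1)).1, (Phi y (p.1, 1)).2 * p.2),
      hy (p.1, 1), hx ((Phi y ((p.1, 1).1, 1)).1, (Phi y ((p.1, 1).1, 1)).2 * (p.1, 1).2)]
    simp [mul_assoc]


def fg : Fin 3 → Psi := ![z 0 * z 1 * z 2, z 1 * z 2 * z 0, z 2 * z 0 * z 1]

lemma lift_shape : ∀ x : FreeGroup (Fin 3), ∀ w : FreeGroup (Fin 3),
    Phi (FreeGroup.lift fg x) (none, w) = (none, x * w) := by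
  intro x
  induction x using FreeGroup.induction_on with
  | C1 => simp
  | of k =>
    intro w
    rw [FreeGroup.lift_apply_of]
    fin_cases k <;>
      simp [fg, map_mul, Equiv.Perm.mul_apply, Phi_z, sigma_apply, sfun]
  | inv_of k hk =>
    intro w
    have h := hk ((FreeGroup.of k)⁻¹ * w)
    rw [mul_inv_cancel_left] at h
    rw [map_inv, map_inv, ← h, Equiv.Perm.inv_def, Equiv.symm_apply_apply]
  | mul x y hx hy =>
    intro w
    rw [map_mul, map_mul, Equiv.Perm.mul_apply, hy, hx, mul_assoc]

def tv (s : Option (Fin 3)) : Psi := s.elim 1 z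

lemma decomp : ∀ g : Psi, ∀ s : Option (Fin 3),
    g * tv s = tv ((Phi g (s, 1)).1) * FreeGroup.lift fg ((Phi g (s, 1)).2) := by
  intro g
  induction g using Monoid.CoprodI.induction_on with
  | one => intro s; simp [tv]
  | of i m =>
    have hm : m = 1 ∨ m = Multiplicative.ofAdd 1 :=
      (show ∀ x : Multiplicative (ZMod 2), x = 1 ∨ x = Multiplicative.ofAdd 1 by decide) m
    rcases hm with rfl | rfl
    · intro s; simp [tv]
    · intro s
      rw [show Monoid.CoprodI.of (i := i) (Multiplicative.ofAdd (1 : ZMod 2)) = z i from rfl,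
        Phi_z]
      cases s with
      | none => simp [tv, sigma_apply, sfun]
      | some j =>
        fin_cases i <;> fin_cases j <;>
          simp [tv, sigma_apply, sfun, fg, mul_inv_rev, zinv, mul_assoc, zz, zsq]
  | mul x y hx hy =>
    intro s
    have hxy : Phi (x * y) (s, 1) =
        ((Phi x ((Phi y (s, 1)).1, 1)).1, (Phi x ((Phi y (s, 1)).1, 1)).2 * (Phi y (s, 1)).2) := by
      rw [map_mul, Equiv.Perm.mul_apply, shape x (Phi y (s, 1))]
    rw [hxy, map_mul, mul_assoc x y, hy s, ← mul_assoc, hx ((Phi y (s, 1)).1), mul_assoc]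



lemma eps_z (i : Fin 3) : eps (z i) = Pi.mulSingle i (Multiplicative.ofAdd 1) := by
  rw [eps, z, Monoid.CoprodI.lift_of, MonoidHom.mulSingle_apply]

lemma range_le : (FreeGroup.lift fg).range ≤ Fprime := by
  rw [FreeGroup.range_lift_eq_closure, Subgroup.closure_le]
  rintro g ⟨k, rfl⟩
  show eps (fg k) ∈ diagSubgroup
  fin_cases k <;>
    · refine ⟨?_, ?_⟩ <;>
      · simp only [fg, Matrix.cons_val_zero, Matrix.cons_val_one, Matrix.head_cons,
          Matrix.cons_val_two, Matrix.tail_cons, map_mul, eps_z, Pi.mul_apply]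
        decide

/-- Lemma 4.2: `F'` is the free group on the three elements `u = z₁z₂z₃`,
`v = z₂z₃z₁` and `w = z₃z₁z₂`; i.e. the homomorphism from the free group on three
generators determined by these elements is injective with image exactly `F'`. -/
theorem Fprime_free_on_uvw :
    Function.Injective
      (FreeGroup.lift ![z 0 * z 1 * z 2, z 1 * z 2 * z 0, z 2 * z 0 * z 1] :
        FreeGroup (Fin 3) →* Psi) ∧
    (FreeGroup.lift ![z 0 * z 1 * z 2, z 1 * z 2 * z 0, z 2 * z 0 * z 1] :
        FreeGroup (Fin 3) →* Psi).range = Fprime := by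
  show Function.Injective (FreeGroup.lift fg : FreeGroup (Fin 3) →* Psi) ∧
    (FreeGroup.lift fg : FreeGroup (Fin 3) →* Psi).range = Fprime
  constructor
  · refine (injective_iff_map_eq_one _).mpr ?_
    intro a ha
    have h := lift_shape a 1
    rw [ha, map_one] at h
    simpa using h.symm
  · refine le_antisymm range_le ?_
    intro g hg
    have hd := decomp g none
    rw [show tv none = 1 from rfl, mul_one] at hd
    have hr : FreeGroup.lift fg ((Phi g (none, 1)).2) ∈ Fprime := range_le ⟨_, rfl⟩
    have htc : eps (tv ((Phi g (none, 1)).1)) ∈ diagSubgroup := by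
      have h2 : tv ((Phi g (none, 1)).1) = g * (FreeGroup.lift fg ((Phi g (none, 1)).2))⁻¹ :=
        eq_mul_inv_iff_mul_eq.mpr hd.symm
      rw [h2, map_mul, map_inv]
      exact diagSubgroup.mul_mem hg (diagSubgroup.inv_mem hr)
    rcases hcc : (Phi g (none, 1)).1 with _ | j
    · rw [hcc] at hd
      rw [show tv none = 1 from rfl, one_mul] at hd
      exact ⟨_, hd.symm⟩
    · exfalso
      rw [hcc] at htc
      have htc2 : eps (z j) ∈ diagSubgroup := htc
      rw [eps_z] at htc2
      obtain ⟨h1, h2⟩ := htc2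
      fin_cases j <;> revert h1 h2 <;> decide

end CSP
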